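/- Let (A; ∧, d) be an SMB algebra over ~, let θ be a congruence of (A; ∧, d), and let (a,b) ∈ ~∨θ. Then there exists e ∈ A with (a,e) ∈ ~∨θ such that (a∧b)∧e ~ e (i.e. [e]_~ ≤ [a∧b]_~ in the semilattice order on ~-classes), and such that every θ-class that meets [a]_~ or [b]_~ also meets [e]_~; that is, for every x ∈ A with x ~ a or x ~ b there exists z ∈ A with z ~ e and (z,x) ∈ θ. -/

import Mathlib

/-- An equivalence relation on `A` compatible with the binary operation `m`
and the ternary operation `d`, i.e. a congruence of the algebra `(A; m, d)`. -/
structure IsCongruence {A : Type*} (m : A → A → A) (d : A → A → A → A)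
    (θ : A → A → Prop) : Prop where
  equiv : Equivalence θ
  compat_m : ∀ {a a' b b'}, θ a a' → θ b b' → θ (m a b) (m a' b')
  compat_d : ∀ {a a' b b' c c'}, θ a a' → θ b b' → θ c c' → θ (d a b c) (d a' b' c')

/-- `(A; m, d)` is an SMB algebra over the congruence `r`. -/
structure IsSMB {A : Type*} (m : A → A → A) (d : A → A → A → A)
    (r : A → A → Prop) : Prop where
  cong : IsCongruence m d r
  idem_m : ∀ x, m x x = x
  idem_d : ∀ x, d x x x = x
  comm : ∀ x y, r (m x y) (m y x)
  assoc : ∀ x y z, r (m (m x y) z) (m x (m y z))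
  proj : ∀ a b, r a b → m a b = b
  mal_left : ∀ a b, r a b → d a b b = a
  mal_right : ∀ a b, r a b → d b b a = a

/-- `(A; m, d)` is a regular SMB algebra over the congruence `r`. -/
structure IsRegularSMB {A : Type*} (m : A → A → A) (d : A → A → A → A)
    (r : A → A → Prop) : Prop where
  smb : IsSMB m d r
  reg1 : ∀ a b c, r (d a b c) (m (m a b) c)
  reg2 : ∀ a b, r (m a b) b → m a b = b
  reg3 : ∀ x y z, d x y z = d (m (m y z) x) (m (m x z) y) (m (m x y) z)
  reg4 : ∀ x y, m (m x y) y = m x y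

/-- The principal congruence generated by the pair `(a, b)`: the smallest
congruence of `(A; m, d)` containing `(a, b)`. -/
def Cg {A : Type*} (m : A → A → A) (d : A → A → A → A) (a b : A) : A → A → Prop :=
  fun x y => ∀ θ : A → A → Prop, IsCongruence m d θ → θ a b → θ x y

/-- The join of two congruences: the smallest congruence of `(A; m, d)`
containing both `ρ` and `σ`. -/
def congJoin {A : Type*} (m : A → A → A) (d : A → A → A → A)
    (ρ σ : A → A → Prop) : A → A → Prop :=
  fun x y => ∀ θ : A → A → Prop, IsCongruence m d θ →
    (∀ u v, ρ u v → θ u v) → (∀ u v, σ u v → θ u v) → θ x y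

section SMBAux

variable {A : Type*} {m : A → A → A} {d : A → A → A → A} {r θ : A → A → Prop}

/-- The chain relation generated by `r` and `θ`. -/
def SMBchain (r θ : A → A → Prop) : A → A → Prop :=
  Relation.ReflTransGen (fun u v => r u v ∨ θ u v)

lemma SMBchain_symm (hr : IsCongruence m d r) (hθ : IsCongruence m d θ)
    {x y : A} (hs : SMBchain r θ x y) : SMBchain r θ y x := by
  induction hs with
  | refl => exact .refl
  | tail _ hbc ih =>
      exact Relation.ReflTransGen.trans
        (Relation.ReflTransGen.single (hbc.imp hr.equiv.symm hθ.equiv.symm)) ih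

lemma SMBchain_isCongruence (hr : IsCongruence m d r) (hθ : IsCongruence m d θ) :
    IsCongruence m d (SMBchain r θ) := by
  have hm1 : ∀ (y : A) {x x'}, SMBchain r θ x x' → SMBchain r θ (m x y) (m x' y) :=
    fun y x x' hs => Relation.ReflTransGen.lift (fun u => m u y)
      (r := fun u v => r u v ∨ θ u v) (p := fun u v => r u v ∨ θ u v)
      (by intro a b hab; exact (Or.imp (fun h' => hr.compat_m h' (hr.equiv.refl y))
        (fun h' => hθ.compat_m h' (hθ.equiv.refl y)) hab)) _ _ hs
  have hm2 : ∀ (x : A) {y y'}, SMBchain r θ y y' → SMBchain r θ (m x y) (m x y') :=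
    fun x y y' hs => Relation.ReflTransGen.lift (fun u => m x u)
      (r := fun u v => r u v ∨ θ u v) (p := fun u v => r u v ∨ θ u v)
      (by intro a b hab; exact (Or.imp (fun h' => hr.compat_m (hr.equiv.refl x) h')
        (fun h' => hθ.compat_m (hθ.equiv.refl x) h') hab)) _ _ hs
  have hd1 : ∀ (y z : A) {x x'}, SMBchain r θ x x' → SMBchain r θ (d x y z) (d x' y z) :=
    fun y z x x' hs => Relation.ReflTransGen.lift (fun u => d u y z)
      (r := fun u v => r u v ∨ θ u v) (p := fun u v => r u v ∨ θ u v)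
      (by intro a b hab; exact (Or.imp (fun h' => hr.compat_d h' (hr.equiv.refl y) (hr.equiv.refl z))
        (fun h' => hθ.compat_d h' (hθ.equiv.refl y) (hθ.equiv.refl z)) hab)) _ _ hs
  have hd2 : ∀ (x z : A) {y y'}, SMBchain r θ y y' → SMBchain r θ (d x y z) (d x y' z) :=
    fun x z y y' hs => Relation.ReflTransGen.lift (fun u => d x u z)
      (r := fun u v => r u v ∨ θ u v) (p := fun u v => r u v ∨ θ u v)
      (by intro a b hab; exact (Or.imp (fun h' => hr.compat_d (hr.equiv.refl x) h' (hr.equiv.refl z))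
        (fun h' => hθ.compat_d (hθ.equiv.refl x) h' (hθ.equiv.refl z)) hab)) _ _ hs
  have hd3 : ∀ (x y : A) {z z'}, SMBchain r θ z z' → SMBchain r θ (d x y z) (d x y z') :=
    fun x y z z' hs => Relation.ReflTransGen.lift (fun u => d x y u)
      (r := fun u v => r u v ∨ θ u v) (p := fun u v => r u v ∨ θ u v)
      (by intro a b hab; exact (Or.imp (fun h' => hr.compat_d (hr.equiv.refl x) (hr.equiv.refl y) h')
        (fun h' => hθ.compat_d (hθ.equiv.refl x) (hθ.equiv.refl y) h') hab)) _ _ hs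
  refine ⟨⟨fun _ => .refl, SMBchain_symm hr hθ, fun h1 h2 => h1.trans h2⟩, ?_, ?_⟩
  · intro a a' b b' ha hb
    exact (hm1 b ha).trans (hm2 a' hb)
  · intro a a' b b' c c' ha hb hc
    exact ((hd1 b c ha).trans (hd2 a' c hb)).trans (hd3 a' b' hc)

lemma SMBchain_le_congJoin {x y : A} (hs : SMBchain r θ x y) :
    congJoin m d r θ x y := by
  intro θ' hθ' h1 h2
  induction hs with
  | refl => exact hθ'.equiv.refl x
  | tail _ hbc ih => exact hθ'.equiv.trans ih (hbc.elim (h1 _ _) (h2 _ _))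

/-- `le x y` means `r (m y x) x`; transitivity of this order. -/
lemma IsSMB.sle_trans (h : IsSMB m d r) {x y z : A}
    (h1 : r (m y x) x) (h2 : r (m z y) y) : r (m z x) x := by
  have t1 : r (m z x) (m z (m y x)) :=
    h.cong.compat_m (h.cong.equiv.refl z) (h.cong.equiv.symm h1)
  have t2 : r (m z (m y x)) (m (m z y) x) := h.cong.equiv.symm (h.assoc z y x)
  have t3 : r (m (m z y) x) (m y x) := h.cong.compat_m h2 (h.cong.equiv.refl x)
  exact h.cong.equiv.trans t1 (h.cong.equiv.trans t2 (h.cong.equiv.trans t3 h1))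

lemma IsSMB.sinf_le_left (h : IsSMB m d r) (x y : A) : r (m x (m x y)) (m x y) := by
  have t1 : r (m x (m x y)) (m (m x x) y) := h.cong.equiv.symm (h.assoc x x y)
  rwa [h.idem_m] at t1

lemma IsSMB.sinf_le_right (h : IsSMB m d r) (x y : A) : r (m y (m x y)) (m x y) := by
  have t1 : r (m y (m x y)) (m y (m y x)) :=
    h.cong.compat_m (h.cong.equiv.refl y) (h.comm x y)
  have t2 : r (m y (m y x)) (m (m y y) x) := h.cong.equiv.symm (h.assoc y y x)
  rw [h.idem_m] at t2
  exact h.cong.equiv.trans t1 (h.cong.equiv.trans t2 (h.comm y x))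

lemma IsSMB.sle_inf (h : IsSMB m d r) {x y z : A}
    (h1 : r (m x z) z) (h2 : r (m y z) z) : r (m (m x y) z) z := by
  have t1 : r (m (m x y) z) (m x (m y z)) := h.assoc x y z
  have t2 : r (m x (m y z)) (m x z) := h.cong.compat_m (h.cong.equiv.refl x) h2
  exact h.cong.equiv.trans t1 (h.cong.equiv.trans t2 h1)

lemma IsSMB.sle_congr (h : IsSMB m d r) {x x' y y' : A}
    (hx : r x x') (hy : r y y') (hle : r (m y x) x) : r (m y' x') x' := by
  have t1 : r (m y' x') (m y x) :=
    h.cong.compat_m (h.cong.equiv.symm hy) (h.cong.equiv.symm hx)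
  exact h.cong.equiv.trans t1 (h.cong.equiv.trans hle hx)

lemma smb_main (h : IsSMB m d r) (hθ : IsCongruence m d θ) (a : A) :
    ∀ b : A, SMBchain r θ a b →
    ∃ e : A, SMBchain r θ a e ∧ r (m (m a b) e) e ∧
      ∀ x : A, (r x a ∨ r x b) → ∃ z : A, r z e ∧ θ z x := by
  intro b hs
  have rrefl := h.cong.equiv.refl
  have rsymm := @h.cong.equiv.symm
  have rtrans := @h.cong.equiv.trans
  induction hs with
  | refl =>
      refine ⟨a, .refl, ?_, ?_⟩
      · rw [h.idem_m, h.idem_m]; exact rrefl a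
      · intro x hx
        exact ⟨x, hx.elim id id, hθ.equiv.refl x⟩
  | @tail bm b' hS' hstep ih =>
      obtain ⟨e, hae, hle, hcov⟩ := ih
      rcases hstep with hbb' | hbb'
      · -- r-step: keep e
        refine ⟨e, hae, ?_, ?_⟩
        · exact h.sle_congr (rrefl e) (h.cong.compat_m (rrefl a) hbb') hle
        · intro x hx
          exact hcov x (hx.imp id (fun hxb' => rtrans hxb' (rsymm hbb')))
      · -- θ-step
        obtain ⟨zb, hzbe, hzbb⟩ := hcov bm (Or.inr (rrefl bm))
        have hzbb' : θ zb b' := hθ.equiv.trans hzbb hbb'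
        have hSc := SMBchain_isCongruence (m := m) (d := d) h.cong hθ
        refine ⟨m zb b', ?_, ?_, ?_⟩
        · -- SMBchain a (m zb b')
          have c1 : SMBchain r θ zb e := .single (Or.inl hzbe)
          have c2 : SMBchain r θ (m zb b') (m zb zb) :=
            hSc.compat_m (hSc.equiv.refl zb) (.single (Or.inr (hθ.equiv.symm hzbb')))
          rw [h.idem_m] at c2
          exact hae.trans (SMBchain_symm h.cong hθ (c2.trans c1))
        · -- order: r (m (m a b') (m zb b')) (m zb b')
          have h1 : r (m zb (m zb b')) (m zb b') := h.sinf_le_left zb b'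
          have h2 : r (m e (m zb b')) (m zb b') := h.sle_congr (rrefl _) hzbe h1
          have h3 : r (m a (m a bm)) (m a bm) := h.sinf_le_left a bm
          have h4 : r (m a (m zb b')) (m zb b') := h.sle_trans (h.sle_trans h2 hle) h3
          have h5 : r (m b' (m zb b')) (m zb b') := h.sinf_le_right zb b'
          exact h.sle_inf h4 h5
        · -- coverage
          intro x hx
          rcases hx with hx | hx
          · obtain ⟨z0, hz0e, hz0x⟩ := hcov x (Or.inl hx)
            refine ⟨m (m b' zb) z0, ?_, ?_⟩
            · have s1 : r z0 zb := rtrans hz0e (rsymm hzbe)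
              have s2 : r (m (m b' zb) z0) (m (m b' zb) zb) :=
                h.cong.compat_m (rrefl _) s1
              have s3 : r (m (m b' zb) zb) (m b' (m zb zb)) := h.assoc b' zb zb
              rw [h.idem_m] at s3
              exact rtrans s2 (rtrans s3 (h.comm b' zb))
            · have t1 : θ (m b' zb) (m zb zb) :=
                hθ.compat_m (hθ.equiv.symm hzbb') (hθ.equiv.refl zb)
              rw [h.idem_m] at t1
              have t2 : θ (m (m b' zb) z0) (m zb z0) :=
                hθ.compat_m t1 (hθ.equiv.refl z0)
              have e3 : m zb z0 = z0 := h.proj zb z0 (rtrans hzbe (rsymm hz0e))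
              rw [e3] at t2
              exact hθ.equiv.trans t2 hz0x
          · refine ⟨m zb x, h.cong.compat_m (rrefl zb) hx, ?_⟩
            have t1 : θ (m zb x) (m b' x) := hθ.compat_m hzbb' (hθ.equiv.refl x)
            rwa [h.proj b' x (rsymm hx)] at t1

end SMBAux

/-- In an SMB algebra over `~`, for a congruence `θ` and `(a,b) ∈ ~∨θ`,
there is `e` with `(a,e) ∈ ~∨θ`, `[e]_~ ≤ [a∧b]_~`, such that every `θ`-class
meeting `[a]_~` or `[b]_~` also meets `[e]_~`. -/
theorem smb_join_injection {A : Type*} (m : A → A → A) (d : A → A → A → A)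
    (r θ : A → A → Prop) (h : IsSMB m d r) (hθ : IsCongruence m d θ)
    (a b : A) (hab : congJoin m d r θ a b) :
    ∃ e : A, congJoin m d r θ a e ∧ r (m (m a b) e) e ∧
      ∀ x : A, (r x a ∨ r x b) → ∃ z : A, r z e ∧ θ z x := by
  have hSab : SMBchain r θ a b := hab _ (SMBchain_isCongruence h.cong hθ)
    (fun u v huv => .single (Or.inl huv)) (fun u v huv => .single (Or.inr huv))
  obtain ⟨e, hae, hle, hcov⟩ := smb_main h hθ a b hSab
  exact ⟨e, SMBchain_le_congJoin hae, hle, hcov⟩
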